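/- For every integer k ≥ 2, a vector c = (k, c_2, c_3, k+1, 1) ∈ ℤ⁵ is cohomology-free if and only if (c_2, c_3) is one of the three pairs (2k, 3k+1), (2k+1, 3k+1), (2k+1, 3k+2). -/

import Mathlib

/-- The primitive ray generators `l₁,…,l₇` of the fan, in counterclockwise order,
acting on `ℤ²` by the dot product. -/
def rayForm : Fin 7 → ℤ × ℤ :=
  ![(1, -1), (2, -1), (3, -1), (1, 0), (0, 1), (-1, 2), (0, -1)]

/-- Extend `c ∈ ℤ⁵` to seven coefficients by `c₆ = c₇ = 0`. -/
def cExt (c : Fin 5 → ℤ) : Fin 7 → ℤ :=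
  fun i => if h : (i : ℕ) < 5 then c ⟨i, h⟩ else 0

/-- `N_c(m) = {i : l_i(m) + c_i < 0}`. -/
def Nset (c : Fin 5 → ℤ) (m : ℤ × ℤ) : Finset (Fin 7) :=
  Finset.univ.filter fun i =>
    (rayForm i).1 * m.1 + (rayForm i).2 * m.2 + cExt c i < 0

/-- A subset of the cyclic index set `Fin 7` is a circular interval if it is empty
or of the form `{a, a+1, …, b}` with indices taken modulo 7. -/
def IsCircularInterval (S : Finset (Fin 7)) : Prop :=
  S = ∅ ∨ ∃ (a : Fin 7) (n : ℕ),
    S = (Finset.range (n + 1)).image fun j : ℕ => a + (⟨j % 7, Nat.mod_lt _ (by norm_num)⟩ : Fin 7)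

/-- `c ∈ ℤ⁵` is cohomology-free if for every `m ∈ ℤ²` and both `ε ∈ {1, -1}`,
the set `N_{εc}(m)` is a circular interval different from the whole index set. -/
def CohomologyFree (c : Fin 5 → ℤ) : Prop :=
  ∀ m : ℤ × ℤ, ∀ ε : ℤ, ε = 1 ∨ ε = -1 →
    IsCircularInterval (Nset (ε • c) m) ∧ Nset (ε • c) m ≠ Finset.univ

lemma mem_Nset {c : Fin 5 → ℤ} {m : ℤ × ℤ} {i : Fin 7} :
    i ∈ Nset c m ↔ (rayForm i).1 * m.1 + (rayForm i).2 * m.2 + cExt c i < 0 := by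
  simp [Nset]

lemma image_big (a : Fin 7) (n : ℕ) (hn : 6 ≤ n) :
    ((Finset.range (n + 1)).image fun j : ℕ => a + (⟨j % 7, Nat.mod_lt _ (by norm_num)⟩ : Fin 7)) = Finset.univ := by
  apply Finset.eq_univ_of_forall
  intro x
  simp only [Finset.mem_image, Finset.mem_range]
  exact ⟨(x - a).val, by omega, by rw [show (⟨(x - a).val % 7, Nat.mod_lt _ (by norm_num)⟩ : Fin 7) = x - a from Fin.ext (Nat.mod_eq_of_lt (x - a).isLt)]; exact add_sub_cancel a x⟩

lemma isCI_bounded (S : Finset (Fin 7)) :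
    IsCircularInterval S ↔ S = ∅ ∨ ∃ (a : Fin 7) (n : Fin 7),
      S = (Finset.range ((n : ℕ) + 1)).image fun j : ℕ => a + (⟨j % 7, Nat.mod_lt _ (by norm_num)⟩ : Fin 7) := by
  constructor
  · rintro (h | ⟨a, n, h⟩)
    · exact Or.inl h
    · rcases lt_or_ge n 7 with hn | hn
      · exact Or.inr ⟨a, ⟨n, hn⟩, h⟩
      · refine Or.inr ⟨a, ⟨6, by norm_num⟩, ?_⟩
        rw [h, image_big a n (by omega), image_big a 6 (by omega)]
  · rintro (h | ⟨a, n, h⟩)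
    · exact Or.inl h
    · exact Or.inr ⟨a, n, h⟩

def GoodSet (S : Finset (Fin 7)) : Prop :=
  ¬((0 : Fin 7) ∈ S ∧ (1 : Fin 7) ∈ S ∧ (2 : Fin 7) ∈ S ∧ (3 : Fin 7) ∈ S ∧ (4 : Fin 7) ∈ S ∧ (5 : Fin 7) ∈ S ∧ (6 : Fin 7) ∈ S) ∧
  ¬((0 : Fin 7) ∈ S ∧ (1 : Fin 7) ∉ S ∧ (1 : Fin 7) ∈ S ∧ (2 : Fin 7) ∉ S ) ∧
  ¬((0 : Fin 7) ∈ S ∧ (1 : Fin 7) ∉ S ∧ (2 : Fin 7) ∈ S ∧ (3 : Fin 7) ∉ S ) ∧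
  ¬((0 : Fin 7) ∈ S ∧ (1 : Fin 7) ∉ S ∧ (3 : Fin 7) ∈ S ∧ (4 : Fin 7) ∉ S ) ∧
  ¬((0 : Fin 7) ∈ S ∧ (1 : Fin 7) ∉ S ∧ (4 : Fin 7) ∈ S ∧ (5 : Fin 7) ∉ S ) ∧
  ¬((0 : Fin 7) ∈ S ∧ (1 : Fin 7) ∉ S ∧ (5 : Fin 7) ∈ S ∧ (6 : Fin 7) ∉ S ) ∧
  ¬((0 : Fin 7) ∈ S ∧ (1 : Fin 7) ∉ S ∧ (6 : Fin 7) ∈ S ∧ (0 : Fin 7) ∉ S ) ∧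
  ¬((1 : Fin 7) ∈ S ∧ (2 : Fin 7) ∉ S ∧ (2 : Fin 7) ∈ S ∧ (3 : Fin 7) ∉ S ) ∧
  ¬((1 : Fin 7) ∈ S ∧ (2 : Fin 7) ∉ S ∧ (3 : Fin 7) ∈ S ∧ (4 : Fin 7) ∉ S ) ∧
  ¬((1 : Fin 7) ∈ S ∧ (2 : Fin 7) ∉ S ∧ (4 : Fin 7) ∈ S ∧ (5 : Fin 7) ∉ S ) ∧
  ¬((1 : Fin 7) ∈ S ∧ (2 : Fin 7) ∉ S ∧ (5 : Fin 7) ∈ S ∧ (6 : Fin 7) ∉ S ) ∧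
  ¬((1 : Fin 7) ∈ S ∧ (2 : Fin 7) ∉ S ∧ (6 : Fin 7) ∈ S ∧ (0 : Fin 7) ∉ S ) ∧
  ¬((2 : Fin 7) ∈ S ∧ (3 : Fin 7) ∉ S ∧ (3 : Fin 7) ∈ S ∧ (4 : Fin 7) ∉ S ) ∧
  ¬((2 : Fin 7) ∈ S ∧ (3 : Fin 7) ∉ S ∧ (4 : Fin 7) ∈ S ∧ (5 : Fin 7) ∉ S ) ∧
  ¬((2 : Fin 7) ∈ S ∧ (3 : Fin 7) ∉ S ∧ (5 : Fin 7) ∈ S ∧ (6 : Fin 7) ∉ S ) ∧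
  ¬((2 : Fin 7) ∈ S ∧ (3 : Fin 7) ∉ S ∧ (6 : Fin 7) ∈ S ∧ (0 : Fin 7) ∉ S ) ∧
  ¬((3 : Fin 7) ∈ S ∧ (4 : Fin 7) ∉ S ∧ (4 : Fin 7) ∈ S ∧ (5 : Fin 7) ∉ S ) ∧
  ¬((3 : Fin 7) ∈ S ∧ (4 : Fin 7) ∉ S ∧ (5 : Fin 7) ∈ S ∧ (6 : Fin 7) ∉ S ) ∧
  ¬((3 : Fin 7) ∈ S ∧ (4 : Fin 7) ∉ S ∧ (6 : Fin 7) ∈ S ∧ (0 : Fin 7) ∉ S ) ∧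
  ¬((4 : Fin 7) ∈ S ∧ (5 : Fin 7) ∉ S ∧ (5 : Fin 7) ∈ S ∧ (6 : Fin 7) ∉ S ) ∧
  ¬((4 : Fin 7) ∈ S ∧ (5 : Fin 7) ∉ S ∧ (6 : Fin 7) ∈ S ∧ (0 : Fin 7) ∉ S ) ∧
  ¬((5 : Fin 7) ∈ S ∧ (6 : Fin 7) ∉ S ∧ (6 : Fin 7) ∈ S ∧ (0 : Fin 7) ∉ S )


lemma isCI_iff_GoodSet (S : Finset (Fin 7)) :
    (IsCircularInterval S ∧ S ≠ Finset.univ) ↔ GoodSet S := by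
  rw [isCI_bounded]
  unfold GoodSet
  revert S
  set_option maxRecDepth 100000 in
  set_option synthInstance.maxHeartbeats 2000000 in
  set_option synthInstance.maxSize 5000 in
  set_option maxHeartbeats 2000000 in decide

lemma pmem0 {a0 a1 a2 a3 a4 : ℤ} {m : ℤ × ℤ} :
    (0 : Fin 7) ∈ Nset ((1 : ℤ) • ![a0, a1, a2, a3, a4]) m ↔ m.1 - m.2 + a0 < 0 := by
  rw [mem_Nset]
  show 1 * m.1 + (-1) * m.2 + (1 : ℤ) * a0 < 0 ↔ _
  omega

lemma pmem1 {a0 a1 a2 a3 a4 : ℤ} {m : ℤ × ℤ} :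
    (1 : Fin 7) ∈ Nset ((1 : ℤ) • ![a0, a1, a2, a3, a4]) m ↔ 2*m.1 - m.2 + a1 < 0 := by
  rw [mem_Nset]
  show 2 * m.1 + (-1) * m.2 + (1 : ℤ) * a1 < 0 ↔ _
  omega

lemma pmem2 {a0 a1 a2 a3 a4 : ℤ} {m : ℤ × ℤ} :
    (2 : Fin 7) ∈ Nset ((1 : ℤ) • ![a0, a1, a2, a3, a4]) m ↔ 3*m.1 - m.2 + a2 < 0 := by
  rw [mem_Nset]
  show 3 * m.1 + (-1) * m.2 + (1 : ℤ) * a2 < 0 ↔ _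
  omega

lemma pmem3 {a0 a1 a2 a3 a4 : ℤ} {m : ℤ × ℤ} :
    (3 : Fin 7) ∈ Nset ((1 : ℤ) • ![a0, a1, a2, a3, a4]) m ↔ m.1 + a3 < 0 := by
  rw [mem_Nset]
  show 1 * m.1 + 0 * m.2 + (1 : ℤ) * a3 < 0 ↔ _
  omega

lemma pmem4 {a0 a1 a2 a3 a4 : ℤ} {m : ℤ × ℤ} :
    (4 : Fin 7) ∈ Nset ((1 : ℤ) • ![a0, a1, a2, a3, a4]) m ↔ m.2 + a4 < 0 := by
  rw [mem_Nset]
  show 0 * m.1 + 1 * m.2 + (1 : ℤ) * a4 < 0 ↔ _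
  omega

lemma pmem5 {a0 a1 a2 a3 a4 : ℤ} {m : ℤ × ℤ} :
    (5 : Fin 7) ∈ Nset ((1 : ℤ) • ![a0, a1, a2, a3, a4]) m ↔ -m.1 + 2*m.2 < 0 := by
  rw [mem_Nset]
  show (-1) * m.1 + 2 * m.2 + (0:ℤ) < 0 ↔ _
  omega

lemma pmem6 {a0 a1 a2 a3 a4 : ℤ} {m : ℤ × ℤ} :
    (6 : Fin 7) ∈ Nset ((1 : ℤ) • ![a0, a1, a2, a3, a4]) m ↔ -m.2 < 0 := by
  rw [mem_Nset]
  show 0 * m.1 + (-1) * m.2 + (0:ℤ) < 0 ↔ _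
  omega

lemma nmem0 {a0 a1 a2 a3 a4 : ℤ} {m : ℤ × ℤ} :
    (0 : Fin 7) ∈ Nset ((-1 : ℤ) • ![a0, a1, a2, a3, a4]) m ↔ m.1 - m.2 - a0 < 0 := by
  rw [mem_Nset]
  show 1 * m.1 + (-1) * m.2 + (-1 : ℤ) * a0 < 0 ↔ _
  omega

lemma nmem1 {a0 a1 a2 a3 a4 : ℤ} {m : ℤ × ℤ} :
    (1 : Fin 7) ∈ Nset ((-1 : ℤ) • ![a0, a1, a2, a3, a4]) m ↔ 2*m.1 - m.2 - a1 < 0 := by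
  rw [mem_Nset]
  show 2 * m.1 + (-1) * m.2 + (-1 : ℤ) * a1 < 0 ↔ _
  omega

lemma nmem2 {a0 a1 a2 a3 a4 : ℤ} {m : ℤ × ℤ} :
    (2 : Fin 7) ∈ Nset ((-1 : ℤ) • ![a0, a1, a2, a3, a4]) m ↔ 3*m.1 - m.2 - a2 < 0 := by
  rw [mem_Nset]
  show 3 * m.1 + (-1) * m.2 + (-1 : ℤ) * a2 < 0 ↔ _
  omega

lemma nmem3 {a0 a1 a2 a3 a4 : ℤ} {m : ℤ × ℤ} :
    (3 : Fin 7) ∈ Nset ((-1 : ℤ) • ![a0, a1, a2, a3, a4]) m ↔ m.1 - a3 < 0 := by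
  rw [mem_Nset]
  show 1 * m.1 + 0 * m.2 + (-1 : ℤ) * a3 < 0 ↔ _
  omega

lemma nmem4 {a0 a1 a2 a3 a4 : ℤ} {m : ℤ × ℤ} :
    (4 : Fin 7) ∈ Nset ((-1 : ℤ) • ![a0, a1, a2, a3, a4]) m ↔ m.2 - a4 < 0 := by
  rw [mem_Nset]
  show 0 * m.1 + 1 * m.2 + (-1 : ℤ) * a4 < 0 ↔ _
  omega

lemma nmem5 {a0 a1 a2 a3 a4 : ℤ} {m : ℤ × ℤ} :
    (5 : Fin 7) ∈ Nset ((-1 : ℤ) • ![a0, a1, a2, a3, a4]) m ↔ -m.1 + 2*m.2 < 0 := by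
  rw [mem_Nset]
  show (-1) * m.1 + 2 * m.2 + (0:ℤ) < 0 ↔ _
  omega

lemma nmem6 {a0 a1 a2 a3 a4 : ℤ} {m : ℤ × ℤ} :
    (6 : Fin 7) ∈ Nset ((-1 : ℤ) • ![a0, a1, a2, a3, a4]) m ↔ -m.2 < 0 := by
  rw [mem_Nset]
  show 0 * m.1 + (-1) * m.2 + (0:ℤ) < 0 ↔ _
  omega


set_option maxHeartbeats 1000000 in
lemma backP (k c2 c3 : ℤ) (hk : 2 ≤ k)
    (hA : (c2 = 2*k ∧ c3 = 3*k + 1) ∨ (c2 = 2*k + 1 ∧ c3 = 3*k + 1) ∨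
      (c2 = 2*k + 1 ∧ c3 = 3*k + 2)) (m : ℤ × ℤ) :
    GoodSet (Nset ((1 : ℤ) • ![k, c2, c3, k + 1, 1]) m) := by
  unfold GoodSet
  refine ⟨?_, ?_, ?_, ?_, ?_, ?_, ?_, ?_, ?_, ?_, ?_, ?_, ?_, ?_, ?_, ?_, ?_, ?_, ?_, ?_, ?_, ?_⟩ <;>
    simp only [pmem0, pmem1, pmem2, pmem3, pmem4, pmem5, pmem6] <;> omega

set_option maxHeartbeats 1000000 in
lemma backN (k c2 c3 : ℤ) (hk : 2 ≤ k)
    (hA : (c2 = 2*k ∧ c3 = 3*k + 1) ∨ (c2 = 2*k + 1 ∧ c3 = 3*k + 1) ∨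
      (c2 = 2*k + 1 ∧ c3 = 3*k + 2)) (m : ℤ × ℤ) :
    GoodSet (Nset ((-1 : ℤ) • ![k, c2, c3, k + 1, 1]) m) := by
  unfold GoodSet
  refine ⟨?_, ?_, ?_, ?_, ?_, ?_, ?_, ?_, ?_, ?_, ?_, ?_, ?_, ?_, ?_, ?_, ?_, ?_, ?_, ?_, ?_, ?_⟩ <;>
    simp only [nmem0, nmem1, nmem2, nmem3, nmem4, nmem5, nmem6] <;> omega

set_option maxHeartbeats 1000000 in
/-- For `k ≥ 2`, the vector `(k, c₂, c₃, k+1, 1)` is cohomology-free iff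
`(c₂, c₃)` is one of `(2k, 3k+1)`, `(2k+1, 3k+1)`, `(2k+1, 3k+2)`. -/
theorem classification_c4_eq_c1_add_one (k : ℤ) (hk : 2 ≤ k) (c2 c3 : ℤ) :
    CohomologyFree ![k, c2, c3, k + 1, 1] ↔
      (c2 = 2*k ∧ c3 = 3*k + 1) ∨ (c2 = 2*k + 1 ∧ c3 = 3*k + 1) ∨
      (c2 = 2*k + 1 ∧ c3 = 3*k + 2) := by
  constructor
  · intro h
    have gap : ∀ (m : ℤ × ℤ) (ε : ℤ), ε = 1 ∨ ε = -1 →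
        GoodSet (Nset (ε • ![k, c2, c3, k + 1, 1]) m) :=
      fun m ε hε => (isCI_iff_GoodSet _).mp ⟨(h m ε hε).1, (h m ε hε).2⟩
    have F1 : 2*k ≤ c2 := by
      by_contra hc
      push_neg at hc
      have g := gap (k, 1) (-1) (Or.inr rfl)
      unfold GoodSet at g
      obtain ⟨_, _, _, C03, _⟩ := g
      exact C03 ⟨nmem0.mpr (show k - 1 - k < 0 by omega),
        fun hm => absurd (show 2*k - 1 - c2 < 0 from nmem1.mp hm) (by omega),
        nmem3.mpr (show k - (k + 1) < 0 by omega),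
        fun hm => absurd (show (1 : ℤ) - 1 < 0 from nmem4.mp hm) (by omega)⟩
    have F3 : c3 ≤ 3*k + 2 := by
      by_contra hc
      push_neg at hc
      have g := gap (k + 1, 1) (-1) (Or.inr rfl)
      unfold GoodSet at g
      obtain ⟨_, _, _, _, _, _, _, _, _, _, _, _, _, _, _, C26, _⟩ := g
      exact C26 ⟨nmem2.mpr (show 3*(k + 1) - 1 - c3 < 0 by omega),
        fun hm => absurd (show (k + 1) - (k + 1) < 0 from nmem3.mp hm) (by omega),
        nmem6.mpr (show -(1 : ℤ) < 0 by omega),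
        fun hm => absurd (show (k + 1) - 1 - k < 0 from nmem0.mp hm) (by omega)⟩
    have F2 : ¬(2*k + 2 ≤ c2 ∧ c3 ≤ 3*k + 2) := by
      rintro ⟨h1, h2⟩
      have g := gap (-(k + 1), 0) 1 (Or.inl rfl)
      unfold GoodSet at g
      obtain ⟨_, _, C02, _⟩ := g
      exact C02 ⟨pmem0.mpr (show -(k + 1) - 0 + k < 0 by omega),
        fun hm => absurd (show 2*(-(k + 1)) - 0 + c2 < 0 from pmem1.mp hm) (by omega),
        pmem2.mpr (show 3*(-(k + 1)) - 0 + c3 < 0 by omega),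
        fun hm => absurd (show -(k + 1) + (k + 1) < 0 from pmem3.mp hm) (by omega)⟩
    have F4 : 3*k + 1 ≤ c3 := by
      by_contra hc
      push_neg at hc
      have g := gap (-(k + 1), -2) 1 (Or.inl rfl)
      unfold GoodSet at g
      obtain ⟨_, _, _, _, _, _, _, _, _, _, _, _, _, C24, C25, _⟩ := g
      rcases lt_or_ge k 3 with hk3 | hk3
      · exact C25 ⟨pmem2.mpr (show 3*(-(k + 1)) - (-2) + c3 < 0 by omega),
          fun hm => absurd (show -(k + 1) + (k + 1) < 0 from pmem3.mp hm) (by omega),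
          pmem5.mpr (show -(-(k + 1)) + 2*(-2) < 0 by omega),
          fun hm => absurd (show -(-2 : ℤ) < 0 from pmem6.mp hm) (by omega)⟩
      · exact C24 ⟨pmem2.mpr (show 3*(-(k + 1)) - (-2) + c3 < 0 by omega),
          fun hm => absurd (show -(k + 1) + (k + 1) < 0 from pmem3.mp hm) (by omega),
          pmem4.mpr (show (-2 : ℤ) + 1 < 0 by omega),
          fun hm => absurd (show -(-(k + 1)) + 2*(-2) < 0 from pmem5.mp hm) (by omega)⟩
    have F5 : ¬(c2 ≤ 2*k ∧ 3*k + 2 ≤ c3) := by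
      rintro ⟨h1, h2⟩
      have g := gap (k + 1, 2) (-1) (Or.inr rfl)
      unfold GoodSet at g
      obtain ⟨_, _, C02, _⟩ := g
      exact C02 ⟨nmem0.mpr (show (k + 1) - 2 - k < 0 by omega),
        fun hm => absurd (show 2*(k + 1) - 2 - c2 < 0 from nmem1.mp hm) (by omega),
        nmem2.mpr (show 3*(k + 1) - 2 - c3 < 0 by omega),
        fun hm => absurd (show (k + 1) - (k + 1) < 0 from nmem3.mp hm) (by omega)⟩
    omega
  · intro hA m ε hε
    rcases hε with rfl | rfl
    · exact (isCI_iff_GoodSet _).mpr (backP k c2 c3 hk hA m)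
    · exact (isCI_iff_GoodSet _).mpr (backN k c2 c3 hk hA m)
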